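/- Let q > 1, ε ∈ {±1}, s ∈ ℂ with Re(s) > −1/2. The formal Hecke series product (∑_{m≥0} q^{-m(s+1/2)} t^m) · (∑_{n≥0} q^{-n(s+1/2)} ε^n t^n) in the polynomial algebra ℂ[t] graded with multiplication rule t^m · t^n = ∑_{l=0}^{min(m,n)} t^{m+n−2l} (the Clebsch–Gordan fusion product) equals ∑_{k≥0} a_k t^k with a_k = q^{-k(s+1/2)}/(1 − ε q^{-2s-1}) · c(k), where c(k) = k+1 if ε = 1, c(k) = 1 if ε = −1 and k even, c(k) = 0 if ε = −1 and k odd. -/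

import Mathlib

open Classical in
/-- The Clebsch–Gordan fusion product of the two Hecke series: the coefficient of `t^k`
(i.e. of `[V_k]`) in
`(∑ q^{-m(s+1/2)} t^m)·(∑ q^{-n(s+1/2)} ε^n t^n)` equals
`q^{-k(s+1/2)}/(1-εq^{-2s-1})·c(k)`. -/
theorem stmt_18 (q : ℝ) (hq : 1 < q) (s : ℂ) (hs : -1/2 < s.re)
    (ε : ℂ) (hε : ε = 1 ∨ ε = -1) (k : ℕ) :
    (∑' p : ℕ × ℕ,
        (if ∃ l : ℕ, l ≤ min p.1 p.2 ∧ p.1 + p.2 = k + 2 * l then (1 : ℂ) else 0) *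
          ((q : ℂ) ^ (-(p.1 : ℂ) * (s + 1/2)) *
            ((q : ℂ) ^ (-(p.2 : ℂ) * (s + 1/2)) * ε ^ p.2)))
      = (q : ℂ) ^ (-(k : ℂ) * (s + 1/2)) / (1 - ε * (q : ℂ) ^ (-2 * s - 1)) *
        (if ε = 1 then ((k : ℂ) + 1) else if Even k then 1 else 0) := by
  have hq0 : (0 : ℝ) < q := lt_trans one_pos hq
  have hqC0 : (q : ℂ) ≠ 0 := by
    exact_mod_cast ne_of_gt hq0
  set r : ℂ := (q : ℂ) ^ (-(s + 1/2)) with hr_def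
  -- powers as nat powers of r
  have hr : ∀ m : ℕ, (q : ℂ) ^ (-(m : ℂ) * (s + 1/2)) = r ^ m := by
    intro m
    rw [hr_def, Complex.cpow_def_of_ne_zero hqC0, Complex.cpow_def_of_ne_zero hqC0,
      ← Complex.exp_nat_mul]
    ring_nf
  -- norm of r
  have hεnorm : ‖ε‖ = 1 := by
    rcases hε with h | h <;> simp [h]
  have hrnorm : ‖r‖ < 1 := by
    rw [hr_def, Complex.norm_cpow_eq_rpow_re_of_pos hq0]
    apply Real.rpow_lt_one_of_one_lt_of_neg hq
    simp only [Complex.neg_re, Complex.add_re, Complex.div_re]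
    simp [Complex.add_re]
    linarith
  have hx : ‖ε * r ^ 2‖ < 1 := by
    rw [norm_mul, hεnorm, one_mul, norm_pow]
    exact pow_lt_one₀ (norm_nonneg r) hrnorm two_ne_zero
  have hx1 : (1 : ℂ) - ε * r ^ 2 ≠ 0 := by
    intro h
    have : ε * r ^ 2 = 1 := by linear_combination -h
    rw [this] at hx
    simp at hx
  -- the reindexing injection
  set i : ℕ × Fin (k + 1) → ℕ × ℕ := fun x => (x.1 + x.2.val, x.1 + (k - x.2.val)) with hi_def
  have hi_inj : Function.Injective i := by
    rintro ⟨l, j⟩ ⟨l', j'⟩ h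
    rw [hi_def, Prod.mk.injEq] at h
    have hj := j.isLt
    have hj' := j'.isLt
    have h1 : l + j.val = l' + j'.val := h.1
    have h2 : l + (k - j.val) = l' + (k - j'.val) := h.2
    have : l = l' ∧ j.val = j'.val := by omega
    exact Prod.ext this.1 (Fin.ext this.2)
  set f : ℕ × ℕ → ℂ := fun p =>
    (if ∃ l : ℕ, l ≤ min p.1 p.2 ∧ p.1 + p.2 = k + 2 * l then (1 : ℂ) else 0) *
      (r ^ p.1 * (r ^ p.2 * ε ^ p.2)) with hf_def
  have hsupp : Function.support f ⊆ Set.range i := by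
    intro p hp
    rw [Function.mem_support, hf_def] at hp
    by_cases hc : ∃ l : ℕ, l ≤ min p.1 p.2 ∧ p.1 + p.2 = k + 2 * l
    · obtain ⟨l, hl, hsum⟩ := hc
      have h1 : l ≤ p.1 := le_trans hl (min_le_left _ _)
      have h2 : l ≤ p.2 := le_trans hl (min_le_right _ _)
      have hlt : p.1 - l < k + 1 := by omega
      refine ⟨(l, ⟨p.1 - l, hlt⟩), ?_⟩
      rw [hi_def]
      have e1 : l + (p.1 - l) = p.1 := by omega
      have e2 : l + (k - (p.1 - l)) = p.2 := by omega
      exact Prod.ext e1 e2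
    · exfalso
      apply hp
      simp only [if_neg hc, zero_mul]
  -- evaluate f on the image
  have heval : ∀ x : ℕ × Fin (k + 1),
      f (i x) = (ε * r ^ 2) ^ x.1 * (ε ^ (k - x.2.val) * r ^ k) := by
    rintro ⟨l, j⟩
    have hj : j.val ≤ k := by omega
    have hc : ∃ l' : ℕ, l' ≤ min (l + j.val) (l + (k - j.val)) ∧
        (l + j.val) + (l + (k - j.val)) = k + 2 * l' := ⟨l, by omega, by omega⟩
    rw [hf_def]
    simp only [hi_def, hc, if_pos]
    have hrpow : r ^ (l + j.val) * r ^ (l + (k - j.val)) = r ^ (2 * l) * r ^ k := by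
      rw [← pow_add, ← pow_add]
      congr 1
      omega
    have hεpow : ε ^ (l + (k - j.val)) = ε ^ l * ε ^ (k - j.val) := pow_add ε l _
    calc (1 : ℂ) * (r ^ (l + j.val) * (r ^ (l + (k - j.val)) * ε ^ (l + (k - j.val))))
        = (r ^ (l + j.val) * r ^ (l + (k - j.val))) * ε ^ (l + (k - j.val)) := by ring
      _ = (r ^ (2 * l) * r ^ k) * (ε ^ l * ε ^ (k - j.val)) := by rw [hrpow, hεpow]
      _ = (ε * r ^ 2) ^ l * (ε ^ (k - j.val) * r ^ k) := by
          rw [mul_pow, pow_mul]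
          ring
  -- summability
  have hFnorm : Summable fun l : ℕ => ‖(ε * r ^ 2) ^ l‖ := by
    simp only [norm_pow]
    exact summable_geometric_of_lt_one (norm_nonneg _) hx
  have hGnorm : Summable fun j : Fin (k + 1) => ‖ε ^ (k - j.val) * r ^ k‖ :=
    Summable.of_finite
  -- main computation
  have key : (∑' p : ℕ × ℕ, f p)
      = (1 - ε * r ^ 2)⁻¹ * ∑ j : Fin (k + 1), ε ^ (k - j.val) * r ^ k := by
    rw [← hi_inj.tsum_eq hsupp, tsum_congr heval,
      ← tsum_mul_tsum_of_summable_norm hFnorm hGnorm,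
      tsum_geometric_of_norm_lt_one hx, tsum_fintype]
  -- compute the finite sum
  have hsum : (∑ j : Fin (k + 1), ε ^ (k - j.val) * r ^ k)
      = (if ε = 1 then ((k : ℂ) + 1) else if Even k then 1 else 0) * r ^ k := by
    rw [← Finset.sum_mul]
    congr 1
    rw [Fin.sum_univ_eq_sum_range (fun j => ε ^ (k - j))]
    rcases hε with h | h
    · subst h
      simp [Finset.card_range]
    · subst h
      have hne : (-1 : ℂ) ≠ 1 := by
        intro h1
        have : (2 : ℂ) = 0 := by linear_combination -h1
        norm_num at this
      rw [if_neg hne]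
      have := Finset.sum_range_reflect (fun j => (-1 : ℂ) ^ j) (k + 1)
      simp only [Nat.add_sub_cancel] at this
      rw [this, neg_one_geom_sum]
      by_cases hek : Even k
      · simp [Nat.even_add_one, hek]
      · simp [Nat.even_add_one, hek]
  -- rewrite the statement
  have hLHS : (∑' p : ℕ × ℕ,
      (if ∃ l : ℕ, l ≤ min p.1 p.2 ∧ p.1 + p.2 = k + 2 * l then (1 : ℂ) else 0) *
        ((q : ℂ) ^ (-(p.1 : ℂ) * (s + 1/2)) *
          ((q : ℂ) ^ (-(p.2 : ℂ) * (s + 1/2)) * ε ^ p.2))) = ∑' p : ℕ × ℕ, f p := by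
    apply tsum_congr
    intro p
    rw [hf_def, hr p.1, hr p.2]
  have hq2 : (q : ℂ) ^ (-2 * s - 1) = r ^ 2 := by
    rw [show (-2 * s - 1 : ℂ) = -((2 : ℕ) : ℂ) * (s + 1/2) by push_cast; ring, hr 2]
  rw [hLHS, key, hsum, hr k, hq2, div_eq_mul_inv]
  ring
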